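/- Under Algorithm 2 with parameter δ ≥ 1 (each vertex i first connects to the maximum-index vertex of each connected component of the Gilbert graph induced on its lesser neighborhood N_i, then greedily adds further lesser neighbors in decreasing index order and then greater neighbors in increasing index order until it has chosen min{deg_G(i), δ} connections), the set C_i of connections initiated by vertex i satisfies |C_i| ≤ max{δ, 5}; consequently the final topology has at most max{δ,5}·n edges. -/

import Mathlib

noncomputable section

/-- The Gilbert graph on vertex set `Fin n`: `i ≠ j` are adjacent iff `dist (x i) (x j) ≤ R`. -/
def gilbert (n : ℕ) (x : Fin n → EuclideanSpace ℝ (Fin 2)) (R : ℝ) : SimpleGraph (Fin n) where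
  Adj i j := i ≠ j ∧ dist (x i) (x j) ≤ R
  symm := by
    constructor
    intro i j h
    exact ⟨h.1.symm, by rw [dist_comm]; exact h.2⟩
  loopless := by constructor; intro i h; exact h.1 rfl

/-- The lesser neighborhood `N_i = {j < i : dist (x i) (x j) ≤ R}`. -/
def lesserN (n : ℕ) (x : Fin n → EuclideanSpace ℝ (Fin 2)) (R : ℝ) (i : Fin n) : Set (Fin n) :=
  {j | j < i ∧ dist (x i) (x j) ≤ R}

/-- Vertex `i` initiates a connection to `j` iff `j` is the maximum-index vertex of its
connected component in the Gilbert graph induced on the lesser neighborhood `N_i`. -/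
def initiates (n : ℕ) (x : Fin n → EuclideanSpace ℝ (Fin 2)) (R : ℝ) (i j : Fin n) : Prop :=
  ∃ hj : j ∈ lesserN n x R i,
    ∀ k, ∀ hk : k ∈ lesserN n x R i,
      ((gilbert n x R).induce (lesserN n x R i)).Reachable ⟨j, hj⟩ ⟨k, hk⟩ → k ≤ j

/-- The topology produced by Algorithm 1: the symmetrization of the initiated connections. -/
def Agraph (n : ℕ) (x : Fin n → EuclideanSpace ℝ (Fin 2)) (R : ℝ) : SimpleGraph (Fin n) where
  Adj i j := initiates n x R i j ∨ initiates n x R j i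
  symm := ⟨fun i j h => Or.symm h⟩
  loopless := by
    constructor
    intro i h
    rcases h with ⟨hj, _⟩ | ⟨hj, _⟩ <;> exact absurd hj.1 (lt_irrefl i)

attribute [local instance] Classical.propDecidable

/-- The lesser neighbors of `i`, as a finset. -/
def lesserF (n : ℕ) (x : Fin n → EuclideanSpace ℝ (Fin 2)) (R : ℝ) (i : Fin n) :
    Finset (Fin n) :=
  Finset.univ.filter (fun j => j < i ∧ dist (x i) (x j) ≤ R)

/-- The greater neighbors of `i`, as a finset. -/
def greaterF (n : ℕ) (x : Fin n → EuclideanSpace ℝ (Fin 2)) (R : ℝ) (i : Fin n) :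
    Finset (Fin n) :=
  Finset.univ.filter (fun j => i < j ∧ dist (x i) (x j) ≤ R)

/-- The connections initiated in Line 1 of Algorithm 2 (those of Algorithm 1):
the maximum-index vertex of each component of the Gilbert graph induced on `N_i`. -/
def MsetF (n : ℕ) (x : Fin n → EuclideanSpace ℝ (Fin 2)) (R : ℝ) (i : Fin n) :
    Finset (Fin n) :=
  Finset.univ.filter (fun j => initiates n x R i j)

/-- Greedy phase adding `max (pool \ C)` while `|C| < δ` and `pool \ C ≠ ∅`
(Lines 2–3 of Algorithm 2), with explicit fuel. -/
def phaseMax {n : ℕ} (δ : ℕ) (pool : Finset (Fin n)) :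
    ℕ → Finset (Fin n) → Finset (Fin n)
  | 0, C => C
  | fuel + 1, C =>
    if h : C.card < δ ∧ (pool \ C).Nonempty then
      phaseMax δ pool fuel (insert ((pool \ C).max' h.2) C)
    else C

/-- Greedy phase adding `min (pool \ C)` while `|C| < δ` and `pool \ C ≠ ∅`
(Lines 4–5 of Algorithm 2), with explicit fuel. -/
def phaseMin {n : ℕ} (δ : ℕ) (pool : Finset (Fin n)) :
    ℕ → Finset (Fin n) → Finset (Fin n)
  | 0, C => C
  | fuel + 1, C =>
    if h : C.card < δ ∧ (pool \ C).Nonempty then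
      phaseMin δ pool fuel (insert ((pool \ C).min' h.2) C)
    else C

/-- The set `C_i` of connections initiated by vertex `i` under Algorithm 2. -/
def Cset (n : ℕ) (x : Fin n → EuclideanSpace ℝ (Fin 2)) (R : ℝ) (δ : ℕ) (i : Fin n) :
    Finset (Fin n) :=
  phaseMin δ (greaterF n x R i) n
    (phaseMax δ (lesserF n x R i) n (MsetF n x R i))

/-- The final topology of Algorithm 2: edge `(i,j)` present iff `j ∈ C_i` or `i ∈ C_j`. -/
def topo2 (n : ℕ) (x : Fin n → EuclideanSpace ℝ (Fin 2)) (R : ℝ) (δ : ℕ) :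
    SimpleGraph (Fin n) where
  Adj i j := i ≠ j ∧ (j ∈ Cset n x R δ i ∨ i ∈ Cset n x R δ j)
  symm := ⟨fun i j h => ⟨h.1.symm, Or.symm h.2⟩⟩
  loopless := ⟨fun i h => h.1 rfl⟩



def toC (p : EuclideanSpace ℝ (Fin 2)) : ℂ := ⟨p 0, p 1⟩

lemma dist_toC (p q : EuclideanSpace ℝ (Fin 2)) : dist (toC p) (toC q) = dist p q := by
  rw [Complex.dist_eq_re_im, EuclideanSpace.dist_eq, Fin.sum_univ_two]
  simp [toC, Real.dist_eq, sq_abs]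

open Complex in
lemma re_mul_conj (u v : ℂ) :
    (u * (starRingEnd ℂ) v).re = ‖u‖ * ‖v‖ * Real.cos (u.arg - v.arg) := by
  conv_lhs => rw [← norm_mul_exp_arg_mul_I u, ← norm_mul_exp_arg_mul_I v]
  rw [map_mul, ← Complex.exp_conj]
  simp only [map_mul, Complex.conj_ofReal, Complex.conj_I, mul_neg]
  rw [show ((‖u‖ : ℂ) * exp (u.arg * I)) * ((‖v‖ : ℂ) * exp (-(v.arg * I)))
      = ((‖u‖ * ‖v‖ : ℝ) : ℂ) * exp (((u.arg - v.arg : ℝ) : ℂ) * I) by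
    push_cast
    rw [mul_mul_mul_comm, ← Complex.exp_add]
    ring_nf]
  rw [Complex.re_ofReal_mul, Complex.exp_ofReal_mul_I_re]

open Complex in
lemma dist_le_of_cos (c a b : ℂ) (R : ℝ) (hR : 0 < R)
    (ha : dist c a ≤ R) (hb : dist c b ≤ R)
    (hcos : (1:ℝ)/2 ≤ Real.cos ((a - c).arg - (b - c).arg)) : dist a b ≤ R := by
  set u := a - c with hu
  set v := b - c with hv
  have hua : ‖u‖ = dist c a := by
    rw [Complex.dist_eq, hu, norm_sub_rev]
  have hvb : ‖v‖ = dist c b := by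
    rw [Complex.dist_eq, hv, norm_sub_rev]
  have hdab : dist a b = ‖u - v‖ := by
    rw [Complex.dist_eq]; congr 1; rw [hu, hv]; ring
  have hsq : (‖u - v‖)^2 = (‖u‖)^2 + (‖v‖)^2
      - 2 * (u * (starRingEnd ℂ) v).re := by
    rw [Complex.sq_norm, Complex.sq_norm, Complex.sq_norm, Complex.normSq_sub]
  have hre := re_mul_conj u v
  have h0u : 0 ≤ ‖u‖ := norm_nonneg u
  have h0v : 0 ≤ ‖v‖ := norm_nonneg v
  have h1 : ‖u‖ * ‖v‖ * (1/2) ≤ (u * (starRingEnd ℂ) v).re := by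
    rw [hre]
    nlinarith [mul_nonneg h0u h0v]
  have hau : ‖u‖ ≤ R := by rw [hua]; exact ha
  have hav : ‖v‖ ≤ R := by rw [hvb]; exact hb
  have hfin : (‖u - v‖)^2 ≤ R^2 := by
    rcases le_total (‖u‖) (‖v‖) with h | h <;> nlinarith
  rw [hdab]
  nlinarith [norm_nonneg (u - v)]

open Complex in
lemma packing (c : ℂ) (R : ℝ) (hR : 0 < R) (S : Finset ℂ)
    (h1 : ∀ s ∈ S, dist c s ≤ R)
    (h2 : ∀ s ∈ S, ∀ t ∈ S, s ≠ t → R < dist s t) : S.card ≤ 5 := by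
  by_contra hcard
  push_neg at hcard
  have h6 : 6 ≤ S.card := hcard
  have hne : ∀ s ∈ S, s ≠ c := by
    intro s hs hsc
    obtain ⟨t, ht, hts⟩ := Finset.exists_mem_ne (show 1 < S.card by omega) s
    have h := h2 s hs t ht (Ne.symm hts)
    rw [hsc] at h
    exact absurd (h1 t ht) (not_le.mpr h)
  have hSne : S.Nonempty := Finset.card_pos.mp (by omega)
  obtain ⟨s₀, hs₀, hmin⟩ := S.exists_min_image (fun s => (s - c).arg) hSne
  set θ : ℂ → ℝ := fun s => (s - c).arg with hθ
  set f : ℂ → ℤ := fun s => ⌊(θ s - θ s₀) * 3 / Real.pi⌋ with hf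
  have hpi := Real.pi_pos
  have hrange : ∀ s ∈ S, f s ∈ Finset.Ico (0:ℤ) 6 := by
    intro s hs
    rw [Finset.mem_Ico]
    refine ⟨Int.floor_nonneg.mpr (div_nonneg (by nlinarith [hmin s hs]) hpi.le), ?_⟩
    apply Int.floor_lt.mpr
    push_cast
    rw [div_lt_iff₀ hpi]
    have ha1 : θ s ≤ Real.pi := Complex.arg_le_pi _
    have ha2 : -Real.pi < θ s₀ := Complex.neg_pi_lt_arg _
    nlinarith
  have key : ∃ a ∈ S, ∃ b ∈ S, a ≠ b ∧ (1:ℝ)/2 ≤ Real.cos (θ a - θ b) := by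
    by_cases hcase : ∃ a ∈ S, ∃ b ∈ S, a ≠ b ∧ f a = f b
    · obtain ⟨a, ha, b, hb, hab, hfab⟩ := hcase
      refine ⟨a, ha, b, hb, hab, ?_⟩
      have habs := Int.abs_sub_lt_one_of_floor_eq_floor hfab
      have heq : (θ a - θ s₀) * 3 / Real.pi - (θ b - θ s₀) * 3 / Real.pi
          = (θ a - θ b) * 3 / Real.pi := by ring
      rw [heq, abs_div, abs_of_pos hpi, div_lt_one hpi, abs_mul] at habs
      have habs' : |θ a - θ b| ≤ Real.pi / 3 := by
        rw [show |(3:ℝ)| = 3 by norm_num] at habs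
        linarith
      have hmono := Real.cos_le_cos_of_nonneg_of_le_pi (abs_nonneg (θ a - θ b))
        (by linarith) habs'
      rw [Real.cos_abs] at hmono
      rw [← Real.cos_pi_div_three]
      exact hmono
    · push_neg at hcase
      have hinj : Set.InjOn f S := by
        intro a ha b hb hfab
        by_contra hne'
        exact hcase a ha b hb hne' hfab
      have himg : S.image f = Finset.Ico (0:ℤ) 6 := by
        apply Finset.eq_of_subset_of_card_le
        · intro z hz
          obtain ⟨s, hs, rfl⟩ := Finset.mem_image.mp hz
          exact hrange s hs
        · rw [Finset.card_image_of_injOn hinj]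
          simpa using h6
      have h5 : (5:ℤ) ∈ S.image f := by rw [himg]; simp
      obtain ⟨s₅, hs₅, hfs₅⟩ := Finset.mem_image.mp h5
      have hf0 : f s₀ = 0 := by
        simp only [hf, sub_self, zero_mul, zero_div, Int.floor_zero]
      have hne5 : s₅ ≠ s₀ := by
        intro h; rw [h, hf0] at hfs₅; exact absurd hfs₅ (by norm_num)
      refine ⟨s₅, hs₅, s₀, hs₀, hne5, ?_⟩
      have h5le : (5:ℝ) ≤ (θ s₅ - θ s₀) * 3 / Real.pi := by
        have := Int.le_floor.mp hfs₅.ge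
        exact_mod_cast this
      have h6lt : (θ s₅ - θ s₀) * 3 / Real.pi < 6 := by
        have := Int.floor_lt.mp (by rw [hfs₅]; norm_num : f s₅ < 6)
        exact_mod_cast this
      set d := θ s₅ - θ s₀ with hd
      have hd1 : 5 * Real.pi / 3 ≤ d := by
        rw [le_div_iff₀ hpi] at h5le; linarith
      have hd2 : d < 2 * Real.pi := by
        rw [div_lt_iff₀ hpi] at h6lt; linarith
      have hcos2 : Real.cos d = Real.cos (2 * Real.pi - d) := by
        rw [Real.cos_two_pi_sub]
      rw [hcos2, ← Real.cos_pi_div_three]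
      exact Real.cos_le_cos_of_nonneg_of_le_pi (by linarith) (by linarith) (by linarith)
  obtain ⟨a, ha, b, hb, hab, hcos⟩ := key
  exact absurd (dist_le_of_cos c a b R hR (h1 a ha) (h1 b hb) hcos)
    (not_le.mpr (h2 a ha b hb hab))


lemma MsetF_card_le (n : ℕ) (x : Fin n → EuclideanSpace ℝ (Fin 2)) (R : ℝ) (hR : 0 < R)
    (i : Fin n) : (MsetF n x R i).card ≤ 5 := by
  classical
  set M := MsetF n x R i with hM
  have hmem : ∀ j ∈ M, initiates n x R i j := by
    intro j hj
    rw [hM, MsetF, Finset.mem_filter] at hj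
    exact hj.2
  have hspread : ∀ j ∈ M, ∀ k ∈ M, j ≠ k → R < dist (toC (x j)) (toC (x k)) := by
    intro j hj k hk hjk
    by_contra hle
    push_neg at hle
    rw [dist_toC] at hle
    obtain ⟨hj', hjmax⟩ := hmem j hj
    obtain ⟨hk', hkmax⟩ := hmem k hk
    have hadj : ((gilbert n x R).induce (lesserN n x R i)).Adj ⟨j, hj'⟩ ⟨k, hk'⟩ := by
      show (gilbert n x R).Adj j k
      exact ⟨hjk, hle⟩
    have h1 := hjmax k hk' hadj.reachable
    have h2 := hkmax j hj' hadj.symm.reachable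
    exact hjk (le_antisymm h2 h1)
  have hinj : Set.InjOn (fun j => toC (x j)) M := by
    intro a ha b hb heq
    by_contra hne
    have h := hspread a ha b hb hne
    have heq' : toC (x a) = toC (x b) := heq
    rw [heq'] at h
    simp only [dist_self] at h
    linarith
  have hcardeq : M.card = (M.image (fun j => toC (x j))).card :=
    (Finset.card_image_of_injOn hinj).symm
  rw [hcardeq]
  apply packing (toC (x i)) R hR
  · intro s hs
    obtain ⟨j, hj, rfl⟩ := Finset.mem_image.mp hs
    rw [dist_toC]
    exact (hmem j hj).fst.2
  · intro s hs t ht hst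
    obtain ⟨j, hj, rfl⟩ := Finset.mem_image.mp hs
    obtain ⟨k, hk, rfl⟩ := Finset.mem_image.mp ht
    have hjk : j ≠ k := by rintro rfl; exact hst rfl
    exact hspread j hj k hk hjk

lemma phaseMax_card {n : ℕ} (δ : ℕ) (pool : Finset (Fin n)) :
    ∀ fuel (C : Finset (Fin n)), (phaseMax δ pool fuel C).card ≤ max C.card δ := by
  intro fuel
  induction fuel with
  | zero => intro C; exact le_max_left _ _
  | succ fuel ih =>
    intro C
    rw [phaseMax]
    split_ifs with h
    · have hle : (insert ((pool \ C).max' h.2) C).card ≤ δ :=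
        le_trans (Finset.card_insert_le _ _) h.1
      exact le_trans (ih _) (le_trans (max_le hle le_rfl) (le_max_right _ _))
    · exact le_max_left _ _

lemma phaseMin_card {n : ℕ} (δ : ℕ) (pool : Finset (Fin n)) :
    ∀ fuel (C : Finset (Fin n)), (phaseMin δ pool fuel C).card ≤ max C.card δ := by
  intro fuel
  induction fuel with
  | zero => intro C; exact le_max_left _ _
  | succ fuel ih =>
    intro C
    rw [phaseMin]
    split_ifs with h
    · have hle : (insert ((pool \ C).min' h.2) C).card ≤ δ :=
        le_trans (Finset.card_insert_le _ _) h.1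
      exact le_trans (ih _) (le_trans (max_le hle le_rfl) (le_max_right _ _))
    · exact le_max_left _ _


/-- Under Algorithm 2, each vertex initiates at most `max δ 5` connections, so the final
topology has at most `max δ 5 * n` edges. -/
theorem topo2_card_Cset_le_and_edges_le
    (n : ℕ) (x : Fin n → EuclideanSpace ℝ (Fin 2)) (R : ℝ) (hR : 0 < R)
    (δ : ℕ) (hδ : 1 ≤ δ) :
    (∀ i : Fin n, (Cset n x R δ i).card ≤ max δ 5) ∧
    (topo2 n x R δ).edgeSet.ncard ≤ max δ 5 * n := by
  have hC : ∀ i : Fin n, (Cset n x R δ i).card ≤ max δ 5 := by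
    intro i
    have h1 := phaseMin_card δ (greaterF n x R i) n
      (phaseMax δ (lesserF n x R i) n (MsetF n x R i))
    have h2 := phaseMax_card δ (lesserF n x R i) n (MsetF n x R i)
    have h3 := MsetF_card_le n x R hR i
    simp only [Cset]
    omega
  refine ⟨hC, ?_⟩
  classical
  set F : Finset (Sym2 (Fin n)) :=
    Finset.univ.biUnion (fun i => (Cset n x R δ i).image (fun j => s(i,j))) with hF
  have hsub : (topo2 n x R δ).edgeSet ⊆ ↑F := by
    intro e he
    induction e with
    | h i j =>
      rw [SimpleGraph.mem_edgeSet] at he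
      obtain ⟨hne, hij | hji⟩ : i ≠ j ∧ (j ∈ Cset n x R δ i ∨ i ∈ Cset n x R δ j) := he
      · exact Finset.mem_coe.mpr (Finset.mem_biUnion.mpr
          ⟨i, Finset.mem_univ _, Finset.mem_image.mpr ⟨j, hij, rfl⟩⟩)
      · rw [show s(i,j) = s(j,i) from Sym2.eq_swap]
        exact Finset.mem_coe.mpr (Finset.mem_biUnion.mpr
          ⟨j, Finset.mem_univ _, Finset.mem_image.mpr ⟨i, hji, rfl⟩⟩)
  have h1 : (topo2 n x R δ).edgeSet.ncard ≤ F.card := by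
    have h := Set.ncard_le_ncard hsub F.finite_toSet
    rwa [Set.ncard_coe_finset] at h
  have h2 : F.card ≤ max δ 5 * n := by
    refine le_trans (Finset.card_biUnion_le) ?_
    have hstep : ∀ i : Fin n, ((Cset n x R δ i).image (fun j => s(i,j))).card ≤ max δ 5 :=
      fun i => le_trans Finset.card_image_le (hC i)
    calc ∑ i : Fin n, ((Cset n x R δ i).image (fun j => s(i,j))).card
        ≤ ∑ _i : Fin n, max δ 5 := Finset.sum_le_sum (fun i _ => hstep i)
      _ = n * max δ 5 := by rw [Finset.sum_const, Finset.card_univ, Fintype.card_fin, smul_eq_mul]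
      _ = max δ 5 * n := mul_comm _ _
  exact le_trans h1 h2
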